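/- Every element of D has exactly two preimages under the right projection π_R on 𝒞_1 ∪ 𝒞_2: exactly one preimage in 𝒞_1 and exactly one in 𝒞_2, and these two preimages are distinct; indeed their x0-coordinates differ by 2s, where s > 0 is the common s-coordinate of the two preimages. Thus π_R : 𝒞_1 ∪ 𝒞_2 → D is two-to-one. (Second part of the paper's main theorem on the toric section transform.) -/

import Mathlib

/-- The canonical relation `𝒞_j ⊆ ℝ⁴ × (ℝ² × ℝ²)` of the circle transform `T_j`
(`j ∈ {1,2}`), for scanning region `X = {2 − r_m < x2 < 1}`:
all pairs `((s, x0, (−1)^{j−1}σ(x1−x0), −σ((−1)^{j−1}s + x1 − x0)),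
((x1,x2), −σ((x1,x2) − c_j(s,x0))))` with `s > 0`, `σ ≠ 0` and
`(x1,x2) ∈ C_j(s,x0) ∩ X`, where `c_j(s,x0) = (x0 + (−1)^j s, 2)`. -/
def Crel (rm : ℝ) (j : ℕ) : Set ((ℝ × ℝ × ℝ × ℝ) × ((ℝ × ℝ) × (ℝ × ℝ))) :=
  {p | ∃ s x0 σ x1 x2 : ℝ, 0 < s ∧ σ ≠ 0 ∧
    (x1 - (x0 + (-1 : ℝ) ^ j * s)) ^ 2 + (x2 - 2) ^ 2 = s ^ 2 + 1 ∧
    2 - rm < x2 ∧ x2 < 1 ∧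
    p = ((s, x0, (-1 : ℝ) ^ (j - 1) * σ * (x1 - x0),
            -σ * ((-1 : ℝ) ^ (j - 1) * s + x1 - x0)),
         ((x1, x2), (-σ * (x1 - (x0 + (-1 : ℝ) ^ j * s)), -σ * (x2 - 2))))}

/-- The set `D = {((x1,x2),(ξ1,ξ2)) : 2 − r_m < x2 < 1, ξ2 ≠ 0}`. -/
def Dset (rm : ℝ) : Set ((ℝ × ℝ) × (ℝ × ℝ)) :=
  {v | 2 - rm < v.1.2 ∧ v.1.2 < 1 ∧ v.2.2 ≠ 0}

/-- Every element of `D` has exactly two preimages under the right projection on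
`𝒞_1 ∪ 𝒞_2`: exactly one in `𝒞_1` and exactly one in `𝒞_2`, and these are distinct;
their `x0`-coordinates differ by `2s`, where `s > 0` is their common `s`-coordinate.
Thus `π_R : 𝒞_1 ∪ 𝒞_2 → D` is two-to-one. -/
theorem stmt7 (rm : ℝ) (hrm : 1 < rm)
    (v : (ℝ × ℝ) × (ℝ × ℝ)) (hv : v ∈ Dset rm) :
    ∃ p q : (ℝ × ℝ × ℝ × ℝ) × ((ℝ × ℝ) × (ℝ × ℝ)),
      p ∈ Crel rm 1 ∧ q ∈ Crel rm 2 ∧ p.2 = v ∧ q.2 = v ∧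
      (∀ p' ∈ Crel rm 1, p'.2 = v → p' = p) ∧
      (∀ q' ∈ Crel rm 2, q'.2 = v → q' = q) ∧
      p ≠ q ∧
      p.1.1 = q.1.1 ∧ 0 < p.1.1 ∧
      p.1.2.1 - q.1.2.1 = 2 * p.1.1 := by
  obtain ⟨⟨x1, x2⟩, ξ1, ξ2⟩ := v
  obtain ⟨h1, h2, h3⟩ := hv
  simp only at h1 h2 h3
  have hx2 : x2 - 2 ≠ 0 := by intro h; linarith
  obtain ⟨σ, hσdef⟩ : ∃ σ : ℝ, σ = -ξ2 / (x2 - 2) := ⟨_, rfl⟩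
  have hσ : σ ≠ 0 := by
    rw [hσdef]; exact div_ne_zero (neg_ne_zero.mpr h3) hx2
  obtain ⟨B, hBdef⟩ : ∃ B : ℝ, B = ξ1 * (x2 - 2) / ξ2 := ⟨_, rfl⟩
  have hB : -σ * B = ξ1 := by rw [hσdef, hBdef]; field_simp
  have hξ2eq : -σ * (x2 - 2) = ξ2 := by rw [hσdef]; field_simp
  have hpos : 0 < B ^ 2 + (x2 - 2) ^ 2 - 1 := by
    nlinarith [sq_nonneg B, sq_nonneg (x2 - 1)]
  obtain ⟨s, hsdef⟩ : ∃ s : ℝ, s = Real.sqrt (B ^ 2 + (x2 - 2) ^ 2 - 1) := ⟨_, rfl⟩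
  have hs : 0 < s := hsdef ▸ Real.sqrt_pos.mpr hpos
  have hs2 : s ^ 2 = B ^ 2 + (x2 - 2) ^ 2 - 1 := hsdef ▸ Real.sq_sqrt hpos.le
  have e1 : -σ * (x1 - (x1 - B + s + (-1 : ℝ) ^ (1 : ℕ) * s)) = ξ1 := by
    linear_combination hB
  have e1' : -σ * (x1 - (x1 - B - s + (-1 : ℝ) ^ (2 : ℕ) * s)) = ξ1 := by
    linear_combination hB
  refine ⟨((s, x1 - B + s, (-1 : ℝ) ^ (1 - 1 : ℕ) * σ * (x1 - (x1 - B + s)),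
              -σ * ((-1 : ℝ) ^ (1 - 1 : ℕ) * s + x1 - (x1 - B + s))),
            ((x1, x2), (ξ1, ξ2))),
          ((s, x1 - B - s, (-1 : ℝ) ^ (2 - 1 : ℕ) * σ * (x1 - (x1 - B - s)),
              -σ * ((-1 : ℝ) ^ (2 - 1 : ℕ) * s + x1 - (x1 - B - s))),
            ((x1, x2), (ξ1, ξ2))), ?_, ?_, rfl, rfl, ?_, ?_, ?_, rfl, hs, by ring⟩
  · refine ⟨s, x1 - B + s, σ, x1, x2, hs, hσ, by linear_combination -hs2, h1, h2, ?_⟩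
    rw [← e1, ← hξ2eq]
  · refine ⟨s, x1 - B - s, σ, x1, x2, hs, hσ, by linear_combination -hs2, h1, h2, ?_⟩
    rw [← e1', ← hξ2eq]
  · rintro p' ⟨s', x0', σ', x1', x2', hs', hσ', hcirc, _, _, rfl⟩ heq
    simp only [Prod.mk.injEq] at heq
    obtain ⟨⟨hx1e, hx2e⟩, he1, he2⟩ := heq
    have hx1e' := hx1e.symm; subst hx1e'
    have hx2e' := hx2e.symm; subst hx2e'
    have hσ'σ : σ' = σ := by
      rw [hσdef, ← he2]; field_simp
    rw [hσ'σ] at he1 he2 ⊢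
    have key : x1 - x0' + s' = B := by
      apply mul_left_cancel₀ (neg_ne_zero.mpr hσ)
      show -σ * _ = -σ * _
      linear_combination he1 - hB
    have hsq : s' ^ 2 = s ^ 2 := by
      linear_combination -hcirc - hs2 + (x1 - x0' + s' + B) * key
    have hss : s' = s := by
      rcases mul_eq_zero.mp (show (s' - s) * (s' + s) = 0 by linear_combination hsq)
        with h | h
      · linarith
      · linarith
    have hss2 := hss.symm; subst hss2
    have hx0 : x0' = x1 - B + s := by linarith
    subst hx0
    rw [he1, he2]
  · rintro q' ⟨s', x0', σ', x1', x2', hs', hσ', hcirc, _, _, rfl⟩ heq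
    simp only [Prod.mk.injEq] at heq
    obtain ⟨⟨hx1e, hx2e⟩, he1, he2⟩ := heq
    have hx1e' := hx1e.symm; subst hx1e'
    have hx2e' := hx2e.symm; subst hx2e'
    have hσ'σ : σ' = σ := by
      rw [hσdef, ← he2]; field_simp
    rw [hσ'σ] at he1 he2 ⊢
    have key : x1 - x0' - s' = B := by
      apply mul_left_cancel₀ (neg_ne_zero.mpr hσ)
      show -σ * _ = -σ * _
      linear_combination he1 - hB
    have hsq : s' ^ 2 = s ^ 2 := by
      linear_combination -hcirc - hs2 + (x1 - x0' - s' + B) * key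
    have hss : s' = s := by
      rcases mul_eq_zero.mp (show (s' - s) * (s' + s) = 0 by linear_combination hsq)
        with h | h
      · linarith
      · linarith
    have hss2 := hss.symm; subst hss2
    have hx0 : x0' = x1 - B - s := by linarith
    subst hx0
    rw [he1, he2]
  · intro h
    simp only [Prod.mk.injEq] at h
    have := h.1.2.1
    linarith
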